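/- Let f : ℝⁿ → ℝ be convex C³ and generalized self-concordant of degree q ∈ [0,2) with constant G > 0, i.e., ∇³f(x)[h,h,u] ≤ G·⟨∇²f(x)h,h⟩^{q/2}·‖h‖^{2−q}·‖u‖ for all x, h, u. Then for all x, y, h: ⟨∇²f(y)h,h⟩^{(2−q)/2} ≤ ⟨∇²f(x)h,h⟩^{(2−q)/2} + ((2−q)/2)·G·‖h‖^{2−q}·‖y−x‖. -/

import Mathlib

open scoped RealInnerProductSpace

private lemma nonneg_of_monotone_hasDerivAt {g : ℝ → ℝ} {c x : ℝ}
    (hg : Monotone g) (h : HasDerivAt g c x) : 0 ≤ c := by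
  have h1 : Filter.Tendsto (slope g x) (nhdsWithin x (Set.Ioi x)) (nhds c) :=
    (hasDerivAt_iff_tendsto_slope.1 h).mono_left
      (nhdsWithin_mono x fun y hy => ne_of_gt hy)
  refine ge_of_tendsto h1 ?_
  filter_upwards [self_mem_nhdsWithin] with y hy
  have hxy : x < y := hy
  rw [slope_def_field]
  exact div_nonneg (sub_nonneg.2 (hg hxy.le)) (sub_nonneg.2 hxy.le)

private lemma rpow_add_le_add_rpow' {a b p : ℝ} (ha : 0 ≤ a) (hb : 0 ≤ b)
    (hp : 0 ≤ p) (hp1 : p ≤ 1) : (a + b) ^ p ≤ a ^ p + b ^ p := by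
  have h := NNReal.rpow_add_le_add_rpow a.toNNReal b.toNNReal hp hp1
  rw [← NNReal.coe_le_coe] at h
  push_cast at h
  rwa [Real.coe_toNNReal _ ha, Real.coe_toNNReal _ hb] at h

set_option maxHeartbeats 2000000 in
theorem generalized_self_concordant_hessian_growth {n : ℕ}
    (f : EuclideanSpace ℝ (Fin n) → ℝ) (hf : ContDiff ℝ 3 f)
    (hconv : ConvexOn ℝ Set.univ f)
    (q G : ℝ) (hq0 : 0 ≤ q) (hq2 : q < 2) (hG : 0 < G)
    (hgsc : ∀ x h u : EuclideanSpace ℝ (Fin n),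
      iteratedFDeriv ℝ 3 f x ![h, h, u]
        ≤ G * (iteratedFDeriv ℝ 2 f x ![h, h]) ^ (q / 2) * ‖h‖ ^ (2 - q) * ‖u‖) :
    ∀ x y h : EuclideanSpace ℝ (Fin n),
      (iteratedFDeriv ℝ 2 f y ![h, h]) ^ ((2 - q) / 2)
        ≤ (iteratedFDeriv ℝ 2 f x ![h, h]) ^ ((2 - q) / 2) +
            (2 - q) / 2 * G * ‖h‖ ^ (2 - q) * ‖y - x‖ := by
  set F1 := fderiv ℝ f with hF1def
  set F2 := fderiv ℝ F1 with hF2def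
  set F3 := fderiv ℝ F2 with hF3def
  have hf1 : Differentiable ℝ f := hf.differentiable (by norm_num)
  have hfc2 : ContDiff ℝ 2 F1 := hf.fderiv_right (by norm_num)
  have hf2 : Differentiable ℝ F1 := hfc2.differentiable (by norm_num)
  have hfc1 : ContDiff ℝ 1 F2 := hfc2.fderiv_right (by norm_num)
  have hf3 : Differentiable ℝ F2 := hfc1.differentiable one_ne_zero
  have hF1d : ∀ z, HasFDerivAt f (F1 z) z := fun z => (hf1 z).hasFDerivAt
  have hF2d : ∀ z, HasFDerivAt F1 (F2 z) z := fun z => (hf2 z).hasFDerivAt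
  have hF3d : ∀ z, HasFDerivAt F2 (F3 z) z := fun z => (hf3 z).hasFDerivAt
  -- conversions between iterated derivatives and fderiv iterates
  have I2 : ∀ z a b : EuclideanSpace ℝ (Fin n),
      iteratedFDeriv ℝ 2 f z ![a, b] = F2 z a b := by
    intro z a b
    rw [iteratedFDeriv_two_apply]
    simp [hF2def, hF1def]
  have I3 : ∀ z a b c : EuclideanSpace ℝ (Fin n),
      iteratedFDeriv ℝ 3 f z ![a, b, c] = F3 z a b c := by
    intro z a b c
    rw [hF3def, hF2def, hF1def]
    simp only [iteratedFDeriv_succ_apply_right]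
    rfl
  -- symmetry of second and third derivatives
  have sym23 : ∀ z b c : EuclideanSpace ℝ (Fin n), F2 z b c = F2 z c b := fun z =>
    second_derivative_symmetric hF1d (hF2d z)
  have sym12 : ∀ z a b c : EuclideanSpace ℝ (Fin n), F3 z a b c = F3 z b a c := by
    intro z a b c
    rw [second_derivative_symmetric hF2d (hF3d z) a b]
  have hdir : ∀ (z a b c : EuclideanSpace ℝ (Fin n)) (t : ℝ),
      HasDerivAt (fun s : ℝ => F2 (z + s • a) b c) (F3 (z + t • a) a b c) t := by
    intro z a b c t
    have hline : HasDerivAt (fun s : ℝ => z + s • a) a t := by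
      simpa using ((hasDerivAt_id t).smul_const a).const_add z
    have step1 : HasDerivAt (fun s : ℝ => F2 (z + s • a)) (F3 (z + t • a) a) t :=
      by
        have A := hF3d (z + t • a)
        exact HasFDerivAt.comp_hasDerivAt (l := F2) (l' := F3 (z + t • a)) t A hline
    have step2 : HasDerivAt (fun s : ℝ => F2 (z + s • a) b) (F3 (z + t • a) a b) t := by
      simpa using step1.clm_apply (hasDerivAt_const t b)
    simpa using step2.clm_apply (hasDerivAt_const t c)
  have symlast : ∀ z a b c : EuclideanSpace ℝ (Fin n), F3 z a b c = F3 z a c b := by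
    intro z a b c
    have h1 := hdir z a b c 0
    have h2 := hdir z a c b 0
    rw [show (fun s : ℝ => F2 (z + s • a) c b) = fun s : ℝ => F2 (z + s • a) b c
      from funext fun s => sym23 _ c b] at h2
    have h3 := h1.unique h2
    simpa using h3
  -- positivity of the Hessian quadratic form
  have hpos : ∀ z v : EuclideanSpace ℝ (Fin n), 0 ≤ F2 z v v := by
    intro z v
    have hline : ∀ t : ℝ, HasDerivAt (fun s : ℝ => z + s • v) v t := by
      intro t
      simpa using ((hasDerivAt_id t).smul_const v).const_add z
    have hg1 : ∀ t : ℝ, HasDerivAt (fun s : ℝ => f (z + s • v)) (F1 (z + t • v) v) t := by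
      intro t
      exact (hF1d (z + t • v)).comp_hasDerivAt t (hline t)
    have hg2 : ∀ t : ℝ, HasDerivAt (fun s : ℝ => F1 (z + s • v) v) (F2 (z + t • v) v v) t := by
      intro t
      have step1 : HasDerivAt (fun s : ℝ => F1 (z + s • v)) (F2 (z + t • v) v) t :=
        (hF2d _).comp_hasDerivAt t (hline t)
      simpa using step1.clm_apply (hasDerivAt_const t v)
    have hgconv : ConvexOn ℝ Set.univ (fun s : ℝ => f (z + s • v)) := by
      have h0 := hconv.comp_affineMap
        (AffineMap.lineMap z (z + v) : ℝ →ᵃ[ℝ] EuclideanSpace ℝ (Fin n))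
      have he : (f ∘ (AffineMap.lineMap z (z + v) : ℝ →ᵃ[ℝ] EuclideanSpace ℝ (Fin n)))
          = fun s : ℝ => f (z + s • v) := by
        funext s
        simp [AffineMap.lineMap_apply, add_sub_cancel_left, add_comm]
      rw [he, Set.preimage_univ] at h0
      exact h0
    have hderiv_eq : deriv (fun s : ℝ => f (z + s • v)) = fun t : ℝ => F1 (z + t • v) v :=
      funext fun t => (hg1 t).deriv
    have hmono : Monotone fun t : ℝ => F1 (z + t • v) v := by
      have hm := hgconv.monotoneOn_deriv fun s _ => (hg1 s).differentiableAt
      rw [hderiv_eq] at hm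
      exact monotoneOn_univ.1 hm
    have h5 := nonneg_of_monotone_hasDerivAt hmono (hg2 0)
    simpa using h5
  intro x y h
  set d := y - x with hd
  have hψd : ∀ t : ℝ, HasDerivAt (fun s : ℝ => F2 (x + s • d) h h) (F3 (x + t • d) d h h) t :=
    fun t => hdir x d h h t
  have hq2' : (0 : ℝ) < 2 - q := by linarith
  have hα0 : (0 : ℝ) < (2 - q) / 2 := by linarith
  have hα1 : (2 - q) / 2 ≤ 1 := by linarith
  have hψ0 : ∀ t : ℝ, 0 ≤ F2 (x + t • d) h h := fun t => hpos _ h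
  have key : ∀ t : ℝ, |F3 (x + t • d) d h h|
      ≤ G * (F2 (x + t • d) h h) ^ (q / 2) * ‖h‖ ^ (2 - q) * ‖d‖ := by
    intro t
    have h1 := hgsc (x + t • d) h d
    have h2 := hgsc (x + t • d) h (-d)
    rw [I3, I2] at h1
    rw [I3, I2, norm_neg] at h2
    have hsym : F3 (x + t • d) d h h = F3 (x + t • d) h h d := by
      rw [sym12, symlast]
    have hneg : F3 (x + t • d) h h (-d) = -(F3 (x + t • d) h h d) := map_neg _ _
    rw [hneg] at h2
    rw [abs_le, hsym]
    exact ⟨by linarith, h1⟩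
  set K := G * ‖h‖ ^ (2 - q) * ‖d‖ with hK
  have hA : (0 : ℝ) ≤ ‖h‖ ^ (2 - q) := Real.rpow_nonneg (norm_nonneg _) _
  have hK0 : 0 ≤ K := mul_nonneg (mul_nonneg hG.le hA) (norm_nonneg _)
  have main : ∀ ε : ℝ, 0 < ε →
      (F2 (x + (1 : ℝ) • d) h h + ε) ^ ((2 - q) / 2)
        ≤ (F2 (x + (0 : ℝ) • d) h h + ε) ^ ((2 - q) / 2) + (2 - q) / 2 * K := by
    intro ε hε
    set Φ : ℝ → ℝ := fun t => (F2 (x + t • d) h h + ε) ^ ((2 - q) / 2) with hΦ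
    set Φ' : ℝ → ℝ := fun t =>
      F3 (x + t • d) d h h * ((2 - q) / 2) * (F2 (x + t • d) h h + ε) ^ ((2 - q) / 2 - 1)
      with hΦ'
    have hΦd : ∀ t : ℝ, HasDerivAt Φ (Φ' t) t := by
      intro t
      exact ((hψd t).add_const ε).rpow_const
        (Or.inl (ne_of_gt (add_pos_of_nonneg_of_pos (hψ0 t) hε)))
    have hbound : ∀ t : ℝ, |Φ' t| ≤ (2 - q) / 2 * K := by
      intro t
      have hψtε : 0 < F2 (x + t • d) h h + ε := add_pos_of_nonneg_of_pos (hψ0 t) hε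
      have e1 : |Φ' t| = |F3 (x + t • d) d h h| * ((2 - q) / 2)
          * (F2 (x + t • d) h h + ε) ^ ((2 - q) / 2 - 1) := by
        rw [hΦ', abs_mul, abs_mul, abs_of_nonneg hα0.le,
          abs_of_nonneg (Real.rpow_nonneg hψtε.le _)]
      have e3 : (F2 (x + t • d) h h) ^ (q / 2) ≤ (F2 (x + t • d) h h + ε) ^ (q / 2) :=
        Real.rpow_le_rpow (hψ0 t) (by linarith) (by linarith)
      have e5 : |F3 (x + t • d) d h h|
          ≤ G * (F2 (x + t • d) h h + ε) ^ (q / 2) * ‖h‖ ^ (2 - q) * ‖d‖ := by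
        refine (key t).trans ?_
        gcongr
      have e4 : (F2 (x + t • d) h h + ε) ^ (q / 2)
          * (F2 (x + t • d) h h + ε) ^ ((2 - q) / 2 - 1) = 1 := by
        rw [← Real.rpow_add hψtε]
        rw [show q / 2 + ((2 - q) / 2 - 1) = 0 by ring, Real.rpow_zero]
      rw [e1]
      calc |F3 (x + t • d) d h h| * ((2 - q) / 2)
            * (F2 (x + t • d) h h + ε) ^ ((2 - q) / 2 - 1)
          ≤ (G * (F2 (x + t • d) h h + ε) ^ (q / 2) * ‖h‖ ^ (2 - q) * ‖d‖) * ((2 - q) / 2)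
            * (F2 (x + t • d) h h + ε) ^ ((2 - q) / 2 - 1) := by
            gcongr
        _ = (2 - q) / 2 * K * ((F2 (x + t • d) h h + ε) ^ (q / 2)
            * (F2 (x + t • d) h h + ε) ^ ((2 - q) / 2 - 1)) := by rw [hK]; ring
        _ = (2 - q) / 2 * K := by rw [e4, mul_one]
    have hmvt := Convex.norm_image_sub_le_of_norm_hasDerivWithin_le
      (f := Φ) (f' := Φ') (s := Set.univ) (C := (2 - q) / 2 * K)
      (fun t _ => (hΦd t).hasDerivWithinAt)
      (fun t _ => by simpa using hbound t)
      convex_univ (Set.mem_univ (0 : ℝ)) (Set.mem_univ (1 : ℝ))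
    have hnorm : ‖(1 : ℝ) - 0‖ = 1 := by norm_num
    rw [hnorm, mul_one, Real.norm_eq_abs] at hmvt
    have h6 : Φ 1 - Φ 0 ≤ (2 - q) / 2 * K := (le_abs_self _).trans hmvt
    have hΦ1 : Φ 1 = (F2 (x + (1 : ℝ) • d) h h + ε) ^ ((2 - q) / 2) := rfl
    have hΦ0 : Φ 0 = (F2 (x + (0 : ℝ) • d) h h + ε) ^ ((2 - q) / 2) := rfl
    linarith
  rw [I2, I2]
  have hx0 : x + (0 : ℝ) • d = x := by simp
  have hy1 : x + (1 : ℝ) • d = y := by simp [hd]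
  refine le_of_forall_pos_le_add ?_
  intro δ hδ
  set ε := δ ^ (2 / (2 - q)) with hεdef
  have hεpos : 0 < ε := Real.rpow_pos_of_pos hδ _
  have hεα : ε ^ ((2 - q) / 2) = δ := by
    rw [hεdef, ← Real.rpow_mul hδ.le,
      show 2 / (2 - q) * ((2 - q) / 2) = 1 by field_simp, Real.rpow_one]
  have m1 : (F2 y h h) ^ ((2 - q) / 2) ≤ (F2 y h h + ε) ^ ((2 - q) / 2) :=
    Real.rpow_le_rpow (hpos y h) (by linarith) hα0.le
  have m2 := main ε hεpos
  rw [hx0, hy1] at m2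
  have m3 : (F2 x h h + ε) ^ ((2 - q) / 2)
      ≤ (F2 x h h) ^ ((2 - q) / 2) + ε ^ ((2 - q) / 2) :=
    rpow_add_le_add_rpow' (hpos x h) hεpos.le hα0.le hα1
  rw [hεα] at m3
  have hKeq : (2 - q) / 2 * G * ‖h‖ ^ (2 - q) * ‖y - x‖ = (2 - q) / 2 * K := by
    rw [hK, hd]; ring
  rw [hKeq]
  linarith
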